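/- Let 0 < s < 1, t, τ ≥ 0 and n ∈ ℤ. Then the series Σ_{k∈ℤ} L^s_{n−k}(t) L^s_k(τ) converges absolutely and Σ_{k∈ℤ} L^s_{n−k}(t) L^s_k(τ) = L^s_n(t+τ); that is, the kernels L^s satisfy the Chapman–Kolmogorov (semigroup) property. -/

import Mathlib

/-- The kernel `L^s_n(t)` of the semigroup generated by minus the discrete fractional
Laplacian on `ℤ` with mesh size `h = 1`. -/
noncomputable def Lker (s : ℝ) (n : ℤ) (t : ℝ) : ℝ :=
  (1 / (2 * Real.pi)) *
    ∫ θ in (-Real.pi)..Real.pi, Real.exp (-t * (4 * Real.sin (θ / 2) ^ 2) ^ s) * Real.cos (n * θ)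

open MeasureTheory Complex intervalIntegral
open scoped Real ComplexConjugate

noncomputable section

instance : Fact (0 < 2 * π) := ⟨Real.two_pi_pos⟩

/-- The integrand profile. -/
def Eker (s t x : ℝ) : ℝ := Real.exp (-t * (4 * Real.sin (x / 2) ^ 2) ^ s)

/-- The symbol function lifted to the circle, as a complex-valued function. -/
def LkerF (s t : ℝ) : AddCircle (2 * π) → ℂ :=
  fun z => ((Real.exp (-t * (2 - 2 * (fourier 1 z).re) ^ s)) : ℂ)

theorem four_sin_sq (θ : ℝ) : 4 * Real.sin (θ / 2) ^ 2 = 2 - 2 * Real.cos θ := by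
  have h1 := Real.cos_two_mul' (θ / 2)
  have h2 := Real.sin_sq_add_cos_sq (θ / 2)
  rw [show 2 * (θ / 2) = θ by ring] at h1
  linarith

theorem fourier_one_re (θ : ℝ) : (fourier 1 (θ : AddCircle (2 * π))).re = Real.cos θ := by
  rw [fourier_coe_apply]
  rw [show 2 * ↑π * I * (1:ℤ) * ↑θ / (↑(2 * π) : ℂ) = ↑θ * I by
    push_cast
    have : (π : ℂ) ≠ 0 := by exact_mod_cast Real.pi_ne_zero
    field_simp]
  exact exp_ofReal_mul_I_re θ

theorem LkerF_coe (s t θ : ℝ) :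
    LkerF s t (θ : AddCircle (2 * π)) = ((Eker s t θ : ℝ) : ℂ) := by
  rw [LkerF, fourier_one_re, Eker, four_sin_sq]

theorem continuous_LkerF (s t : ℝ) (hs : 0 ≤ s) : Continuous (LkerF s t) := by
  apply Complex.continuous_ofReal.comp
  apply Real.continuous_exp.comp
  apply Continuous.mul continuous_const
  apply Continuous.rpow_const _ (fun x => Or.inr hs)
  exact (continuous_const.sub (continuous_const.mul
    (Complex.continuous_re.comp (fourier 1).continuous)))

theorem continuous_Eker (s t : ℝ) (hs : 0 ≤ s) : Continuous (Eker s t) := by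
  apply Real.continuous_exp.comp
  apply Continuous.mul continuous_const
  apply Continuous.rpow_const _ (fun x => Or.inr hs)
  fun_prop

theorem Eker_even (s t x : ℝ) : Eker s t (-x) = Eker s t x := by
  simp [Eker, neg_div]

theorem integral_odd_eq_zero {g : ℝ → ℝ} (h : ∀ x, g (-x) = -g x) :
    ∫ x in (-π)..π, g x = 0 := by
  have h1 : (∫ x in (-π)..π, g (-x)) = ∫ x in (-π)..π, g x := by
    simpa using intervalIntegral.integral_comp_neg (a := -π) (b := π) (f := g)
  have h2 : (∫ x in (-π)..π, g (-x)) = -∫ x in (-π)..π, g x := by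
    simp_rw [h]
    rw [intervalIntegral.integral_neg]
  linarith

theorem fourierCoeff_LkerF (s t : ℝ) (hs : 0 ≤ s) (m : ℤ) :
    fourierCoeff (LkerF s t) m = ((Lker s m t : ℝ) : ℂ) := by
  have hEc : Continuous (Eker s t) := continuous_Eker s t hs
  rw [fourierCoeff_eq_intervalIntegral _ m (-π)]
  have hb : -π + 2 * π = π := by ring
  rw [hb]
  have key : ∀ x : ℝ, fourier (-m) (x : AddCircle (2 * π)) • LkerF s t (x : AddCircle (2 * π))
      = ((Real.cos (m * x) * Eker s t x : ℝ) : ℂ)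
        + ((-(Real.sin (m * x) * Eker s t x) : ℝ) : ℂ) * I := by
    intro x
    rw [LkerF_coe, fourier_coe_apply]
    rw [show 2 * ↑π * I * (↑(-m) : ℂ) * ↑x / (↑(2 * π) : ℂ) = (↑(-((m : ℝ) * x)) : ℂ) * I by
      push_cast
      have : (π : ℂ) ≠ 0 := by exact_mod_cast Real.pi_ne_zero
      field_simp]
    rw [Complex.exp_mul_I, smul_eq_mul]
    rw [← Complex.ofReal_cos, ← Complex.ofReal_sin]
    rw [Real.cos_neg, Real.sin_neg]
    push_cast
    ring
  rw [intervalIntegral.integral_congr (g := fun x =>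
      ((Real.cos (m * x) * Eker s t x : ℝ) : ℂ)
        + ((-(Real.sin (m * x) * Eker s t x) : ℝ) : ℂ) * I)
    (fun x _ => key x)]
  have hi1 : IntervalIntegrable (fun x => ((Real.cos (m * x) * Eker s t x : ℝ) : ℂ))
      volume (-π) π := by
    apply Continuous.intervalIntegrable
    fun_prop
  have hi2 : IntervalIntegrable (fun x => ((-(Real.sin (m * x) * Eker s t x) : ℝ) : ℂ) * I)
      volume (-π) π := by
    apply Continuous.intervalIntegrable
    fun_prop
  rw [intervalIntegral.integral_add hi1 hi2]
  rw [intervalIntegral.integral_mul_const, intervalIntegral.integral_ofReal,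
    intervalIntegral.integral_ofReal]
  have hodd : (∫ x in (-π)..π, -(Real.sin (m * x) * Eker s t x)) = 0 := by
    apply integral_odd_eq_zero
    intro x
    rw [show (m : ℝ) * (-x) = -((m : ℝ) * x) by ring, Real.sin_neg, Eker_even]
    ring
  rw [hodd]
  rw [Lker]
  have h3 : (∫ θ in (-π)..π, Real.exp (-t * (4 * Real.sin (θ / 2) ^ 2) ^ s) * Real.cos (m * θ))
      = ∫ x in (-π)..π, Real.cos (m * x) * Eker s t x := by
    apply intervalIntegral.integral_congr
    intro x _
    simp only [Eker]
    exact mul_comm _ _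
  rw [h3]
  simp [Complex.real_smul]

theorem LkerF_mul (s t τ : ℝ) (z : AddCircle (2 * π)) :
    LkerF s t z * LkerF s τ z = LkerF s (t + τ) z := by
  simp only [LkerF, ← Complex.ofReal_mul, ← Real.exp_add]
  norm_cast
  congr 1
  ring

theorem conj_LkerF (s t : ℝ) (z : AddCircle (2 * π)) :
    (starRingEnd ℂ) (LkerF s t z) = LkerF s t z := by
  simp only [LkerF, Complex.conj_ofReal]

theorem Lker_neg (s t : ℝ) (m : ℤ) : Lker s (-m) t = Lker s m t := by
  unfold Lker
  congr 1
  apply intervalIntegral.integral_congr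
  intro x _
  push_cast
  rw [show -(m:ℝ) * x = -((m:ℝ)*x) by ring, Real.cos_neg]

open scoped InnerProductSpace in
theorem Lker_CK (s t τ : ℝ) (hs0 : 0 < s) (ht : 0 ≤ t) (hτ : 0 ≤ τ) (n : ℤ) :
    (Summable fun k : ℤ => |Lker s (n - k) t * Lker s k τ|) ∧
    (∑' k : ℤ, Lker s (n - k) t * Lker s k τ) = Lker s n (t + τ) := by
  have hs : (0:ℝ) ≤ s := hs0.le
  let f : C(AddCircle (2 * π), ℂ) := ⟨LkerF s t, continuous_LkerF s t hs⟩
  let g : C(AddCircle (2 * π), ℂ) := ⟨LkerF s τ, continuous_LkerF s τ hs⟩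
  let u : C(AddCircle (2 * π), ℂ) := f * fourier n
  let uL : Lp ℂ 2 (@AddCircle.haarAddCircle (2 * π) _) :=
    ContinuousMap.toLp (E := ℂ) 2 AddCircle.haarAddCircle ℂ u
  let gL : Lp ℂ 2 (@AddCircle.haarAddCircle (2 * π) _) :=
    ContinuousMap.toLp (E := ℂ) 2 AddCircle.haarAddCircle ℂ g
  have hcoeff_toLp : ∀ h : C(AddCircle (2 * π), ℂ), ∀ k : ℤ,
      fourierCoeff (↑(ContinuousMap.toLp (E := ℂ) 2 AddCircle.haarAddCircle ℂ h) :
        AddCircle (2 * π) → ℂ) k = fourierCoeff (⇑h) k := by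
    intro h k
    simp only [fourierCoeff]
    apply MeasureTheory.integral_congr_ae
    filter_upwards [ContinuousMap.coeFn_toLp (E := ℂ) (p := 2) AddCircle.haarAddCircle (𝕜 := ℂ) h]
      with z hz
    rw [hz]
  have hcoeff_u : ∀ k : ℤ, fourierCoeff (⇑u) k = ((Lker s (n - k) t : ℝ) : ℂ) := by
    intro k
    have h1 : fourierCoeff (⇑u) k = fourierCoeff (LkerF s t) (k - n) := by
      simp only [fourierCoeff]
      congr 1
      funext z
      show fourier (-k) z • (LkerF s t z * fourier n z) = _
      rw [smul_eq_mul, smul_eq_mul, show -(k - n) = -k + n by ring, fourier_add]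
      ring
    rw [h1, fourierCoeff_LkerF s t hs (k - n), show k - n = -(n - k) by ring, Lker_neg]
  have hcoeff_g : ∀ k : ℤ, fourierCoeff (⇑g) k = ((Lker s k τ : ℝ) : ℂ) := by
    intro k
    exact fourierCoeff_LkerF s τ hs k
  -- inner products with the basis
  have hbu : ∀ k : ℤ, ⟪uL, fourierBasis k⟫_ℂ = ((Lker s (n - k) t : ℝ) : ℂ) := by
    intro k
    rw [← inner_conj_symm, ← fourierBasis.repr_apply_apply, fourierBasis_repr,
      hcoeff_toLp u k, hcoeff_u k, Complex.conj_ofReal]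
  have hbg : ∀ k : ℤ, ⟪fourierBasis k, gL⟫_ℂ = ((Lker s k τ : ℝ) : ℂ) := by
    intro k
    rw [← fourierBasis.repr_apply_apply, fourierBasis_repr, hcoeff_toLp g k, hcoeff_g k]
  -- the inner product ⟪uL, gL⟫ is the n-th coefficient of the product
  have hug : ⟪uL, gL⟫_ℂ = ((Lker s n (t + τ) : ℝ) : ℂ) := by
    rw [MeasureTheory.L2.inner_def]
    have : ∀ᵐ z ∂(@AddCircle.haarAddCircle (2 * π) _),
        ⟪uL z, gL z⟫_ℂ = fourier (-n) z • LkerF s (t + τ) z := by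
      filter_upwards [ContinuousMap.coeFn_toLp (E := ℂ) (p := 2) AddCircle.haarAddCircle (𝕜 := ℂ) u,
        ContinuousMap.coeFn_toLp (E := ℂ) (p := 2) AddCircle.haarAddCircle (𝕜 := ℂ) g] with z hz1 hz2
      rw [RCLike.inner_apply, hz1, hz2]
      show LkerF s τ z * (starRingEnd ℂ) (LkerF s t z * fourier n z) = _
      rw [map_mul, conj_LkerF, ← fourier_neg, smul_eq_mul, ← LkerF_mul s t τ z]
      ring
    rw [MeasureTheory.integral_congr_ae this]
    exact (fourierCoeff_LkerF s (t + τ) hs n).symm ▸ rfl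
  have hterm : ∀ k : ℤ, ⟪uL, fourierBasis k⟫_ℂ * ⟪fourierBasis k, gL⟫_ℂ
      = ((Lker s (n - k) t * Lker s k τ : ℝ) : ℂ) := by
    intro k
    rw [hbu k, hbg k, Complex.ofReal_mul]
  have hsumC : Summable fun k : ℤ => ((Lker s (n - k) t * Lker s k τ : ℝ) : ℂ) := by
    have := fourierBasis.summable_inner_mul_inner uL gL
    simpa only [hterm] using this
  have hsumR : Summable fun k : ℤ => Lker s (n - k) t * Lker s k τ := by
    have := hsumC.map Complex.reCLM Complex.reCLM.continuous
    simpa only [Function.comp_def, Complex.reCLM_apply, Complex.ofReal_re] using this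
  constructor
  · have := summable_norm_iff.mpr hsumR
    simpa [Real.norm_eq_abs, abs_mul] using this
  · have htsum := fourierBasis.tsum_inner_mul_inner uL gL
    simp_rw [hterm] at htsum
    rw [hug, ← Complex.ofReal_tsum] at htsum
    exact_mod_cast htsum

/-- The Chapman–Kolmogorov (semigroup) property of the kernels `L^s`. -/
theorem Lker_chapman_kolmogorov (s t τ : ℝ) (hs0 : 0 < s) (hs1 : s < 1)
    (ht : 0 ≤ t) (hτ : 0 ≤ τ) (n : ℤ) :
    (Summable fun k : ℤ => |Lker s (n - k) t * Lker s k τ|) ∧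
    (∑' k : ℤ, Lker s (n - k) t * Lker s k τ) = Lker s n (t + τ) := by
  exact Lker_CK s t τ hs0 ht hτ n

end
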